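/- Let c₁, c₂ be purely imaginary unit quaternions, φ₁, φ₂ ∈ ℝ, δ₁, δ₂ ∈ [0,π], and set r := min over |s| ≤ δ₁, |t| ≤ δ₂ of (cos s cos t − sin s sin t ⟨c₁,c₂⟩). Then every W ∈ C(c₁,φ₁,δ₁) ⊗ C(c₂,φ₂,δ₂) satisfies ⟨W, exp(φ₁c₁) exp(φ₂c₂)⟩ ≥ r, and some element of this Minkowski product attains the value r; consequently the smallest spherical cap of the form U(exp(φ₁c₁)exp(φ₂c₂), η) containing C(c₁,φ₁,δ₁) ⊗ C(c₂,φ₂,δ₂) has η = arccos r. -/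

import Mathlib

open Real Set

noncomputable section

abbrev H : Type := Quaternion ℝ

/-- Inner product on ℍ regarded as ℝ⁴ : ⟨A,B⟩ = re(A B*). -/
def qInner (a b : H) : ℝ := (a * star b).re

/-- The set of unit quaternions, the 3-sphere S³. -/
def S3 : Set H := {u : H | ‖u‖ = 1}

/-- Spherical cap U(U₀,t) = {U ∈ S³ : ⟨U,U₀⟩ ≥ cos t}. -/
def cap (u₀ : H) (t : ℝ) : Set H := {u : H | u ∈ S3 ∧ qInner u u₀ ≥ Real.cos t}

/-- Minkowski product of two quaternion sets. -/
def mprod (U V : Set H) : Set H := Set.image2 (· * ·) U V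

/-- exp(s n) = cos s + (sin s) n for purely imaginary unit n. -/
def qexp (s : ℝ) (n : H) : H := (Real.cos s : H) + Real.sin s • n

/-- The boundary (frontier) of A in the subspace topology of S³:
for A ⊆ S³ this coincides with the frontier taken in the topological subspace S³. -/
def bdryIn (A : Set H) : Set H := S3 ∩ closure A ∩ closure (S3 \ A)

/-- The great-circle arc C(c,φ,δ) = {exp(s c) : |s - φ| ≤ δ}. -/
def Carc (c : H) (φ δ : ℝ) : Set H := {u : H | ∃ s : ℝ, |s - φ| ≤ δ ∧ u = qexp s c}


lemma sq_neg_one (c : H) (h : c.re = 0) (h' : ‖c‖ = 1) : c * c = -1 := by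
  have hs : star c = -c := Quaternion.star_eq_neg.2 h
  have h2 : c * star c = ((Quaternion.normSq c : ℝ) : H) := Quaternion.self_mul_star c
  have h3 : Quaternion.normSq c = 1 := by
    rw [Quaternion.normSq_eq_norm_mul_self, h']; ring
  rw [hs, h3, mul_neg] at h2
  have h4 := congrArg Neg.neg h2
  simpa using h4

lemma qexp_mul (c : H) (h : c.re = 0) (h' : ‖c‖ = 1) (a b : ℝ) :
    qexp a c * qexp b c = qexp (a + b) c := by
  have h2 := sq_neg_one c h h'
  simp only [qexp, Real.cos_add, Real.sin_add]
  rw [add_mul, mul_add, mul_add, mul_smul_comm, smul_mul_assoc, smul_mul_assoc,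
    mul_smul_comm, smul_smul, h2]
  push_cast
  ext <;> simp [Quaternion.re_one, Quaternion.imI_one, Quaternion.imJ_one, Quaternion.imK_one] <;> ring

lemma qexp_star (c : H) (h : c.re = 0) (a : ℝ) : star (qexp a c) = qexp (-a) c := by
  have hs : star c = -c := Quaternion.star_eq_neg.2 h
  simp [qexp, hs, Real.cos_neg, Real.sin_neg]

lemma qexp_norm (c : H) (h : c.re = 0) (h' : ‖c‖ = 1) (a : ℝ) : ‖qexp a c‖ = 1 := by
  have h1 : qexp a c * star (qexp a c) = 1 := by
    rw [qexp_star c h, qexp_mul c h h', add_neg_cancel]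
    simp [qexp]
  have h2 : ‖qexp a c‖ * ‖qexp a c‖ = 1 := by
    have := congrArg norm h1
    rwa [norm_mul, norm_star, norm_one] at this
  nlinarith [norm_nonneg (qexp a c)]

lemma re_mul_comm (x y : H) : (x * y).re = (y * x).re := by
  simp [Quaternion.re_mul]; ring

lemma abs_re_le_norm' (x : H) : |x.re| ≤ ‖x‖ := by
  have h1 : x.re ^ 2 ≤ Quaternion.normSq x := by
    rw [Quaternion.normSq_def']
    nlinarith [sq_nonneg x.imI, sq_nonneg x.imJ, sq_nonneg x.imK]
  have h2 : Quaternion.normSq x = ‖x‖ * ‖x‖ := Quaternion.normSq_eq_norm_mul_self x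
  nlinarith [abs_nonneg x.re, norm_nonneg x, sq_abs x.re]

lemma core (c₁ c₂ : H) (hc₁ : c₁.re = 0) (hc₁' : ‖c₁‖ = 1)
    (hc₂ : c₂.re = 0) (hc₂' : ‖c₂‖ = 1) (a b p q : ℝ) :
    qInner (qexp a c₁ * qexp b c₂) (qexp p c₁ * qexp q c₂) =
      Real.cos (a - p) * Real.cos (b - q) -
        Real.sin (a - p) * Real.sin (b - q) * qInner c₁ c₂ := by
  have key : qInner (qexp a c₁ * qexp b c₂) (qexp p c₁ * qexp q c₂) =
      (qexp (a - p) c₁ * qexp (b - q) c₂).re := by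
    unfold qInner
    rw [star_mul, qexp_star c₁ hc₁, qexp_star c₂ hc₂]
    rw [show qexp a c₁ * qexp b c₂ * (qexp (-q) c₂ * qexp (-p) c₁)
        = qexp a c₁ * (qexp b c₂ * qexp (-q) c₂) * qexp (-p) c₁ by noncomm_ring]
    rw [qexp_mul c₂ hc₂ hc₂', re_mul_comm]
    rw [show qexp (-p) c₁ * (qexp a c₁ * qexp (b + -q) c₂)
        = (qexp (-p) c₁ * qexp a c₁) * qexp (b + -q) c₂ by noncomm_ring]
    rw [qexp_mul c₁ hc₁ hc₁']
    norm_num [sub_eq_add_neg, add_comm]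
  rw [key]
  have hq : qInner c₁ c₂ = -(c₁ * c₂).re := by
    unfold qInner
    rw [Quaternion.star_eq_neg.2 hc₂]
    simp
  rw [hq]
  simp only [qexp]
  simp [Quaternion.re_mul, hc₁, hc₂]
  ring


theorem stmt9 (c₁ c₂ : H) (hc₁ : c₁.re = 0) (hc₁' : ‖c₁‖ = 1)
    (hc₂ : c₂.re = 0) (hc₂' : ‖c₂‖ = 1)
    (φ₁ φ₂ : ℝ) (δ₁ δ₂ : ℝ) (hδ₁ : δ₁ ∈ Set.Icc 0 π) (hδ₂ : δ₂ ∈ Set.Icc 0 π)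
    (r : ℝ)
    (hr : IsLeast {x : ℝ | ∃ s t : ℝ, |s| ≤ δ₁ ∧ |t| ≤ δ₂ ∧
      x = Real.cos s * Real.cos t - Real.sin s * Real.sin t * qInner c₁ c₂} r) :
    (∀ W ∈ mprod (Carc c₁ φ₁ δ₁) (Carc c₂ φ₂ δ₂),
        qInner W (qexp φ₁ c₁ * qexp φ₂ c₂) ≥ r) ∧
      (∃ W ∈ mprod (Carc c₁ φ₁ δ₁) (Carc c₂ φ₂ δ₂),
        qInner W (qexp φ₁ c₁ * qexp φ₂ c₂) = r) ∧
      IsLeast {η : ℝ | η ∈ Set.Icc 0 π ∧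
          mprod (Carc c₁ φ₁ δ₁) (Carc c₂ φ₂ δ₂) ⊆ cap (qexp φ₁ c₁ * qexp φ₂ c₂) η}
        (Real.arccos r)  := by
  classical
  set Y := qexp φ₁ c₁ * qexp φ₂ c₂ with hY
  -- Part A : lower bound
  have partA : ∀ W ∈ mprod (Carc c₁ φ₁ δ₁) (Carc c₂ φ₂ δ₂), qInner W Y ≥ r := by
    rintro W ⟨u, hu, v, hv, rfl⟩
    obtain ⟨s, hs, rfl⟩ := hu
    obtain ⟨t, ht, rfl⟩ := hv
    rw [core c₁ c₂ hc₁ hc₁' hc₂ hc₂']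
    exact hr.2 ⟨s - φ₁, t - φ₂, hs, ht, rfl⟩
  -- Part B : attained
  obtain ⟨s₀, t₀, hs₀, ht₀, hr₀⟩ := hr.1
  have hW₀mem : (qexp (φ₁ + s₀) c₁ * qexp (φ₂ + t₀) c₂) ∈
      mprod (Carc c₁ φ₁ δ₁) (Carc c₂ φ₂ δ₂) := by
    refine ⟨qexp (φ₁ + s₀) c₁, ⟨φ₁ + s₀, by simpa using hs₀, rfl⟩,
      qexp (φ₂ + t₀) c₂, ⟨φ₂ + t₀, by simpa using ht₀, rfl⟩, rfl⟩
  have hW₀val : qInner (qexp (φ₁ + s₀) c₁ * qexp (φ₂ + t₀) c₂) Y = r := by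
    rw [hY, core c₁ c₂ hc₁ hc₁' hc₂ hc₂']
    simpa using hr₀.symm
  -- bounds on r
  have hYnorm : ‖Y‖ = 1 := by
    rw [hY, norm_mul, qexp_norm c₁ hc₁ hc₁', qexp_norm c₂ hc₂ hc₂', one_mul]
  have hWnorm : ∀ W ∈ mprod (Carc c₁ φ₁ δ₁) (Carc c₂ φ₂ δ₂), ‖W‖ = 1 := by
    rintro W ⟨u, ⟨s, _, rfl⟩, v, ⟨t, _, rfl⟩, rfl⟩
    rw [norm_mul, qexp_norm c₁ hc₁ hc₁', qexp_norm c₂ hc₂ hc₂', one_mul]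
  have habs : |r| ≤ 1 := by
    rw [← hW₀val]
    calc |qInner (qexp (φ₁ + s₀) c₁ * qexp (φ₂ + t₀) c₂) Y|
        ≤ ‖qexp (φ₁ + s₀) c₁ * qexp (φ₂ + t₀) c₂ * star Y‖ := abs_re_le_norm' _
      _ = 1 := by
          rw [norm_mul, norm_star, hYnorm, hWnorm _ hW₀mem, one_mul]
  have hr1 : -1 ≤ r := neg_le_of_abs_le habs
  have hr2 : r ≤ 1 := le_of_abs_le habs
  refine ⟨partA, ⟨_, hW₀mem, hW₀val⟩, ?_, ?_⟩
  · -- arccos r is in the set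
    refine ⟨⟨Real.arccos_nonneg r, Real.arccos_le_pi r⟩, ?_⟩
    intro W hW
    refine ⟨hWnorm W hW, ?_⟩
    rw [Real.cos_arccos hr1 hr2]
    exact partA W hW
  · -- lower bound
    rintro η ⟨⟨hη0, hηπ⟩, hsub⟩
    have hcap := hsub hW₀mem
    have hle : Real.cos η ≤ r := by
      have := hcap.2
      rwa [hW₀val] at this
    calc Real.arccos r = π / 2 - Real.arcsin r := rfl
      _ ≤ π / 2 - Real.arcsin (Real.cos η) := by
          have := Real.monotone_arcsin hle
          linarith
      _ = Real.arccos (Real.cos η) := rfl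
      _ = η := Real.arccos_cos hη0 hηπ
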